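/- Let q ≥ 0, let a_{2q+1} ≥ a_{2q} ≥ ⋯ ≥ a_1 ≥ 2 be even integers, let a_0 be an even integer with a_1 ≥ a_0 ≥ 0, let I ⊆ {1,…,q} satisfy a_{2i} = a_{2i−1} for every i ∈ I, and let μ_1,…,μ_x and ν_1,…,ν_y be positive integers. Let P be the partition whose multiset of parts is {a_{2q+1}−1} ⊎ {a_{2i}, a_{2i−1} : i ∈ I} ⊎ {a_{2j}+1, a_{2j−1}−1 : j ∈ {1,…,q}∖I} ⊎ {a_0+1} ⊎ {μ_u, μ_u : 1 ≤ u ≤ x} ⊎ {ν_v, ν_v : 1 ≤ v ≤ y}, and write |P| = 2n. Then the multiset of the n largest elements of H(P) equals {a_{2q+1}−2, a_{2q+1}−4, …, 2, 0} ⊎ (⊎_{i∈I} K_{a_{2i}}) ⊎ (⊎_{j∉I} S(a_{2j}, a_{2j−1})) ⊎ {a_0, a_0−2, …, 4, 2} ⊎ (⊎_u K_{μ_u}) ⊎ (⊎_v K_{ν_v}), where for even integers a ≥ b ≥ 2 we set S(a,b) := {a, a−2, …, b+2, b} ⊎ {b−2, b−2, b−4, b−4, …, 2, 2} ⊎ {0}.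 (This is the computation at the heart of Theorem C for G = SO(2n,ℂ), non-very-even dual orbits: the Dynkin element h^∨ of the dual orbit O^∨ ⊆ so(2n,ℂ) attached by Sommers' canonical preimage to (O, C_I) coincides with the maximal term Ψ(O, π) of R(Õ^{C_I}), proving the Achar–Sommers conjecture in type D.) -/

import Mathlib

/-- The multiset `K_j`: each of `j-1, j-3, …` down to `2` (if `j` is odd) or `1` (if `j`
is even) with multiplicity 2, together with a single `0` when `j` is odd. -/
def Kmult (j : ℕ) : Multiset ℕ :=
  if Even j then 2 • (((List.range (j / 2)).map (fun i => 2 * i + 1) : List ℕ) : Multiset ℕ)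
  else 2 • (((List.range (j / 2)).map (fun i => 2 * i + 2) : List ℕ) : Multiset ℕ) + {0}

/-- The arithmetic string `{r-1, r-3, …, 3-r, 1-r}` attached to a part `r`. -/
def hString (r : ℕ) : Multiset ℤ :=
  (((List.range r).map (fun t => (r : ℤ) - 1 - 2 * t) : List ℤ) : Multiset ℤ)

/-- `H(P)`: the multiset union over the parts `r` of `P` of the strings `{r-1, …, 1-r}`. -/
def HofP (P : Multiset ℕ) : Multiset ℤ := P.bind hString

/-- The multiset of the `n` largest elements of `M`. -/
def topN (M : Multiset ℤ) (n : ℕ) : Multiset ℤ :=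
  (((M.sort (· ≤ ·)).reverse.take n : List ℤ) : Multiset ℤ)

/-- The multiset `{m, m-2, …, 4, 2}` of positive even numbers up to an even number `m`. -/
def evensUpTo (m : ℕ) : Multiset ℕ :=
  (((List.range (m / 2)).map (fun i => 2 * i + 2) : List ℕ) : Multiset ℕ)

/-- The multiset `{m-2, m-4, …, 2, 0}` of even numbers below an even number `m`. -/
def evensBelow (m : ℕ) : Multiset ℕ :=
  (((List.range (m / 2)).map (fun i => 2 * i) : List ℕ) : Multiset ℕ)

/-- For even `a ≥ b ≥ 2`, the multiset
`S(a,b) = {a, a-2, …, b+2, b} ⊎ {b-2, b-2, b-4, b-4, …, 2, 2} ⊎ {0}`. -/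
def Smult (a b : ℕ) : Multiset ℕ :=
  (((List.range ((a - b) / 2 + 1)).map (fun i => b + 2 * i) : List ℕ) : Multiset ℕ)
    + 2 • evensUpTo (b - 2) + {0}

-- ### helper lemmas
lemma list_coe_cast (l : List ℕ) : (l.flatMap fun a => [(a:ℤ)]) = l.map (fun (a : ℕ) => (a:ℤ)) := by
  induction l with
  | nil => rfl
  | cons x l ih => simp_all

lemma coe_app_sing {α : Type*} (l : List α) (x : α) : (↑(l ++ [x]) : Multiset α) = ↑l + {x} := rfl

lemma two_smul_add {α : Type*} (s t : Multiset α) : 2 • (s + t) = 2 • s + 2 • t := by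
  rw [smul_add]

lemma two_smul_sing {α : Type*} (x : α) : (2 • ({x} : Multiset α)) = {x, x} := rfl

lemma two_smul_eq {α : Type*} (s : Multiset α) : 2 • s = s + s := two_nsmul s

lemma pair_split {α : Type*} (x y : α) : ({x, y} : Multiset α) = {x} + {y} := rfl

lemma add_pair {α : Type*} (M : Multiset α) (x y : α) : M + ({x, y} : Multiset α) = x ::ₘ (M + {y}) := by
  rw [pair_split, add_comm, add_assoc, Multiset.singleton_add, add_comm]

lemma hString_eq (r : ℕ) :
    hString r = (Multiset.range r).map (fun (t : ℕ) => (r:ℤ) - 1 - 2*(t:ℤ)) := by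
  unfold hString
  rw [Multiset.range, Multiset.map_coe]
  simp
  apply List.Perm.of_eq
  generalize List.range r = l
  induction l <;> simp_all

lemma hString_step (m : ℕ) :
    hString (m + 2) = hString m + {((m:ℤ)+1), -((m:ℤ)+1)} := by
  rw [hString_eq, hString_eq]
  have h1 : List.range (m+2) = 0 :: ((List.range m).map Nat.succ ++ [m + 1]) := by
    rw [show m + 2 = (m+1)+1 from rfl, List.range_succ_eq_map, List.range_succ, List.map_append]
    rfl
  rw [Multiset.range, h1]
  have h2 : ((fun (t:ℕ) => ((m+2:ℕ):ℤ) - 1 - 2*(t:ℤ)) ∘ Nat.succ) = (fun (t:ℕ) => (m:ℤ) - 1 - 2*(t:ℤ)) := by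
    funext t; simp only [Function.comp]; push_cast; ring
  have h3 : ((m+2:ℕ):ℤ) - 1 - 2*((0:ℕ):ℤ) = (m:ℤ)+1 := by push_cast; ring
  have h4 : ((m+2:ℕ):ℤ) - 1 - 2*((m+1:ℕ):ℤ) = -((m:ℤ)+1) := by push_cast; ring
  simp only [Multiset.cons_coe, Multiset.map_cons, Multiset.map_coe, List.map_append,
    List.map_map, List.map_cons, List.map_nil, h2, h3, h4]
  rw [Multiset.range, Multiset.map_coe, add_pair]
  rfl

lemma hString_zero : hString 0 = 0 := rfl

lemma hString_one : hString 1 = {0} := by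
  rw [hString_eq]
  simp

lemma Kmult_step (m : ℕ) : Kmult (m + 2) = Kmult m + {m + 1, m + 1} := by
  have hdiv : (m + 2) / 2 = m / 2 + 1 := by omega
  rcases Nat.even_or_odd m with he | ho
  · have he' : m % 2 = 0 := Nat.even_iff.mp he
    have he2 : Even (m + 2) := by rw [Nat.even_iff]; omega
    rw [Kmult, Kmult, if_pos he2, if_pos he, hdiv, List.range_succ, List.map_append]
    have : 2 * (m / 2) + 1 = m + 1 := by omega
    rw [List.map_singleton, this, coe_app_sing, two_smul_add, two_smul_sing]
  · have ho1 : m % 2 = 1 := Nat.odd_iff.mp ho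
    have ho' : ¬ Even m := by rw [Nat.even_iff]; omega
    have ho2 : ¬ Even (m + 2) := by rw [Nat.even_iff]; omega
    rw [Kmult, Kmult, if_neg ho2, if_neg ho', hdiv, List.range_succ, List.map_append]
    have : 2 * (m / 2) + 2 = m + 1 := by omega
    rw [List.map_singleton, this, coe_app_sing, two_smul_add, two_smul_sing]
    rw [add_right_comm]

lemma evensUpTo_eq (k : ℕ) :
    evensUpTo (2 * k) = (((List.range k).map (fun i => 2 * i + 2) : List ℕ) : Multiset ℕ) := by
  rw [evensUpTo, Nat.mul_div_cancel_left _ two_pos]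

lemma evensUpTo_step (k : ℕ) :
    evensUpTo (2 * (k + 1)) = evensUpTo (2 * k) + {2 * k + 2} := by
  rw [evensUpTo_eq, evensUpTo_eq, List.range_succ, List.map_append, List.map_singleton, coe_app_sing]

lemma evensBelow_eq (k : ℕ) :
    evensBelow (2 * k + 2) = evensUpTo (2 * k) + {0} := by
  rw [evensBelow, evensUpTo_eq, show (2*k+2)/2 = k + 1 by omega, List.range_succ_eq_map,
    List.map_cons, List.map_map]
  rw [show ((fun i => 2 * i) ∘ Nat.succ) = (fun i => 2 * i + 2) by funext i; simp [Function.comp]; omega]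
  rw [show (2 * 0 : ℕ) = 0 from rfl, add_comm, Multiset.singleton_add]
  rfl

-- key per-part lemmas
lemma hString_pair (m : ℕ) :
    hString m + hString m
      = (Kmult m).map (fun z : ℕ => (z:ℤ))
        + ((Kmult m).map (fun z : ℕ => (z:ℤ))).map (fun z : ℤ => -z) := by
  induction m using Nat.twoStepInduction with
  | zero => simp [hString_zero, Kmult]
  | one => simp [hString_one, Kmult]
  | more m ih _ =>
    rw [hString_step]
    have hmz : ((m+1:ℕ):ℤ) = (m:ℤ)+1 := by push_cast; ring
    have hpair : ({m+1, m+1} : Multiset ℕ).map (fun z : ℕ => (z:ℤ)) = {(m:ℤ)+1, (m:ℤ)+1} := by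
      simp [hmz]
    have hpairneg : ({(m:ℤ)+1, (m:ℤ)+1} : Multiset ℤ).map (fun z : ℤ => -z) = {-((m:ℤ)+1), -((m:ℤ)+1)} := by
      simp
    rw [Kmult_step]
    simp only [Multiset.map_add, hpair, hpairneg]
    calc hString m + {(m:ℤ)+1, -((m:ℤ)+1)} + (hString m + {(m:ℤ)+1, -((m:ℤ)+1)})
        = (hString m + hString m) + ({(m:ℤ)+1, -((m:ℤ)+1)} + {(m:ℤ)+1, -((m:ℤ)+1)}) := by abel
      _ = _ := by
          rw [ih, pair_split ((m:ℤ)+1) (-((m:ℤ)+1)), pair_split ((m:ℤ)+1) ((m:ℤ)+1),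
            pair_split (-((m:ℤ)+1)) (-((m:ℤ)+1))]
          abel

lemma hString_odd (s : ℕ) :
    hString (2*s+1)
      = (evensUpTo (2*s)).map (fun z : ℕ => (z:ℤ)) + {0}
        + ((evensUpTo (2*s)).map (fun z : ℕ => (z:ℤ))).map (fun z : ℤ => -z) := by
  induction s with
  | zero => simp [hString_one, evensUpTo]
  | succ s ih =>
    have h1 : 2*(s+1)+1 = (2*s+1) + 2 := by ring
    rw [h1, hString_step, ih, show 2*(s+1) = 2*s+2 by ring, show (2*s+2 : ℕ) = 2*(s+1) by ring,
      evensUpTo_step]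
    simp only [Multiset.map_add, Multiset.map_singleton]
    have hc : (((2*s+1:ℕ)):ℤ) + 1 = ((2*s+2 : ℕ) : ℤ) := by push_cast; ring
    rw [pair_split, hc]
    abel

lemma eU_split (c d : ℕ) :
    evensUpTo (2*c+2+2*d)
      = (((List.range (d+1)).map (fun i => 2*c+2 + 2*i) : List ℕ) : Multiset ℕ)
        + evensUpTo (2*c) := by
  induction d with
  | zero =>
    rw [show 2*c+2+2*0 = 2*(c+1) by ring, evensUpTo_step]
    simp only [List.range_succ, List.range_zero, List.nil_append, List.map_singleton]
    rw [show 2*c+2+2*0 = 2*c+2 by ring, add_comm]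
    rfl
  | succ d ih =>
    rw [show 2*c+2+2*(d+1) = 2*((c+d+1)+1) by ring, evensUpTo_step,
      show 2*(c+d+1) = 2*c+2+2*d by ring, ih]
    conv_rhs => rw [List.range_succ, List.map_append, List.map_singleton, coe_app_sing]
    rw [show 2*c+2+2*d+2 = 2*c+2+2*(d+1) by ring]
    abel

lemma Smult_eq (c d : ℕ) :
    Smult (2*c+2+2*d) (2*c+2)
      = (((List.range (d+1)).map (fun i => 2*c+2 + 2*i) : List ℕ) : Multiset ℕ)
        + 2 • evensUpTo (2*c) + {0} := by
  rw [Smult, show 2*c+2+2*d - (2*c+2) = 2*d by omega, show 2*d/2 = d by omega,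
    show 2*c+2-2 = 2*c by omega]

lemma hString_S' (c d : ℕ) :
    hString (2*c+2+2*d + 1) + hString (2*c+2 - 1)
      = (Smult (2*c+2+2*d) (2*c+2)).map (fun z : ℕ => (z:ℤ))
        + ((Smult (2*c+2+2*d) (2*c+2)).map (fun z : ℕ => (z:ℤ))).map (fun z : ℤ => -z) := by
  rw [show 2*c+2+2*d+1 = 2*(c+d+1)+1 by ring, show 2*c+2-1 = 2*c+1 by omega,
    hString_odd, hString_odd, Smult_eq,
    show 2*(c+d+1) = 2*c+2+2*d by ring, eU_split]
  simp only [Multiset.map_add, two_smul_eq, Multiset.map_singleton, neg_zero]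
  push_cast
  simp only [neg_zero]
  abel

lemma hString_BC (s t : ℕ) :
    hString (2*s+2 - 1) + hString (2*t + 1)
      = (evensBelow (2*s+2) + evensUpTo (2*t)).map (fun z : ℕ => (z:ℤ))
        + ((evensBelow (2*s+2) + evensUpTo (2*t)).map (fun z : ℕ => (z:ℤ))).map (fun z : ℤ => -z) := by
  rw [show 2*s+2-1 = 2*s+1 by omega, hString_odd, hString_odd, evensBelow_eq]
  simp only [Multiset.map_add, Multiset.map_singleton, neg_zero]
  push_cast
  simp only [neg_zero]
  abel

lemma topN_symm (A : Multiset ℤ) (hA : ∀ x ∈ A, 0 ≤ x) :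
    topN (A + A.map (fun z : ℤ => -z)) (Multiset.card A) = A := by
  classical
  set s : List ℤ := A.sort (· ≤ ·) with hs
  have hssort : s.Pairwise (· ≤ ·) := Multiset.pairwise_sort _ _
  have hsA : (s : Multiset ℤ) = A := Multiset.sort_eq _ _
  set l₁ : List ℤ := s.reverse.map (fun z => -z) with hl1
  have hl1coe : (l₁ : Multiset ℤ) = A.map (fun z : ℤ => -z) := by
    rw [hl1, ← Multiset.map_coe, Multiset.coe_reverse, hsA]
  have hl1sorted : l₁.Pairwise (· ≤ ·) := by
    rw [hl1]
    apply List.Pairwise.map (R := fun a b : ℤ => b ≤ a)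
    · intro a b h; exact neg_le_neg h
    · exact List.pairwise_reverse.mpr (by simpa [List.Pairwise] using hssort)
  have hmem1 : ∀ x ∈ l₁, x ≤ 0 := by
    intro x hx
    rw [hl1] at hx
    obtain ⟨a, ha, rfl⟩ := List.mem_map.mp hx
    have : a ∈ A := by rw [← hsA]; exact Multiset.mem_coe.mpr (List.mem_reverse.mp ha)
    linarith [hA a this]
  have hmem2 : ∀ y ∈ s, 0 ≤ y := by
    intro y hy; exact hA y (by rw [← hsA]; exact Multiset.mem_coe.mpr hy)
  have happ : (l₁ ++ s).Pairwise (· ≤ ·) := by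
    rw [List.pairwise_append]
    exact ⟨hl1sorted, hssort, fun x hx y hy => le_trans (hmem1 x hx) (hmem2 y hy)⟩
  have hsortM : (A + A.map (fun z : ℤ => -z)).sort (· ≤ ·) = l₁ ++ s := by
    apply List.Perm.eq_of_pairwise' (Multiset.pairwise_sort _ _) happ
    rw [← Multiset.coe_eq_coe, Multiset.sort_eq, ← hl1coe, ← hsA, Multiset.coe_add,
      Multiset.coe_eq_coe]
    exact List.perm_append_comm
  rw [topN, hsortM, List.reverse_append]
  rw [List.take_left' (by rw [List.length_reverse]; exact (Multiset.length_sort _).trans rfl)]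
  rw [Multiset.coe_reverse, hsA]

lemma card_HofP (P : Multiset ℕ) : Multiset.card (HofP P) = P.sum := by
  rw [HofP, Multiset.card_bind,
    show (Multiset.card ∘ hString) = id from funext (fun r => by simp [hString_eq]),
    Multiset.map_id]


/-- Achar–Sommers conjecture, type D computation (non-very-even dual orbits): for even
`a_{2q+1} ≥ ⋯ ≥ a_1 ≥ 2`, even `a_0` with `a_1 ≥ a_0 ≥ 0`, `I ⊆ {1,…,q}` with
`a_{2i} = a_{2i-1}` for `i ∈ I`, and positive integers `μ_u`, `ν_v`, let `P` be the
partition with parts `{a_{2q+1}-1} ⊎ {a_{2i}, a_{2i-1} : i ∈ I}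
⊎ {a_{2j}+1, a_{2j-1}-1 : j ∉ I} ⊎ {a_0+1} ⊎ {μ_u, μ_u} ⊎ {ν_v, ν_v}`, `|P| = 2n`.
Then the `n` largest elements of `H(P)` form the multiset
`{a_{2q+1}-2, …, 2, 0} ⊎ (⊎_{i∈I} K_{a_{2i}}) ⊎ (⊎_{j∉I} S(a_{2j}, a_{2j-1}))
⊎ {a_0, a_0-2, …, 4, 2} ⊎ (⊎_u K_{μ_u}) ⊎ (⊎_v K_{ν_v})`. -/
theorem acharSommers_typeD (q : ℕ) (a : ℕ → ℕ) (I : Finset ℕ) (μ ν : List ℕ)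
    (ha_even : ∀ i, i ≤ 2 * q + 1 → Even (a i))
    (ha_mono : ∀ i, i < 2 * q + 1 → a i ≤ a (i + 1))
    (ha_ge : ∀ i, 1 ≤ i → i ≤ 2 * q + 1 → 2 ≤ a i)
    (hI : I ⊆ Finset.Icc 1 q)
    (hIa : ∀ i ∈ I, a (2 * i) = a (2 * i - 1))
    (hμ : ∀ m ∈ μ, 0 < m) (hν : ∀ m ∈ ν, 0 < m)
    (P : Multiset ℕ)
    (hP : P = ({a (2 * q + 1) - 1} : Multiset ℕ)
        + I.val.bind (fun i => ({a (2 * i), a (2 * i - 1)} : Multiset ℕ))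
        + ((Finset.Icc 1 q) \ I).val.bind
            (fun j => ({a (2 * j) + 1, a (2 * j - 1) - 1} : Multiset ℕ))
        + ({a 0 + 1} : Multiset ℕ)
        + 2 • (μ : Multiset ℕ) + 2 • (ν : Multiset ℕ)) :
    topN (HofP P) (P.sum / 2)
      = (evensBelow (a (2 * q + 1))
          + I.val.bind (fun i => Kmult (a (2 * i)))
          + ((Finset.Icc 1 q) \ I).val.bind (fun j => Smult (a (2 * j)) (a (2 * j - 1)))
          + evensUpTo (a 0)
          + (μ : Multiset ℕ).bind Kmult
          + (ν : Multiset ℕ).bind Kmult).map (fun z => (z : ℤ)) := by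
  classical
  obtain ⟨s, hs⟩ : ∃ s, a (2 * q + 1) = 2 * s + 2 := by
    have h1 := ha_even (2 * q + 1) le_rfl
    have h2 := ha_ge (2 * q + 1) (by omega) le_rfl
    rw [Nat.even_iff] at h1
    exact ⟨(a (2 * q + 1) - 2) / 2, by omega⟩
  obtain ⟨t, ht⟩ : ∃ t, a 0 = 2 * t := by
    have h1 := ha_even 0 (by omega)
    rw [Nat.even_iff] at h1
    exact ⟨a 0 / 2, by omega⟩
  set R : Multiset ℕ := evensBelow (a (2 * q + 1))
          + I.val.bind (fun i => Kmult (a (2 * i)))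
          + ((Finset.Icc 1 q) \ I).val.bind (fun j => Smult (a (2 * j)) (a (2 * j - 1)))
          + evensUpTo (a 0)
          + (μ : Multiset ℕ).bind Kmult
          + (ν : Multiset ℕ).bind Kmult with hR
  have key : HofP P = R.map (fun z : ℕ => (z:ℤ))
      + (R.map (fun z : ℕ => (z:ℤ))).map (fun z : ℤ => -z) := by
    have G2 : I.val.bind (fun i => hString (a (2*i)) + hString (a (2*i-1)))
        = (I.val.bind (fun i => Kmult (a (2*i)))).map (fun z : ℕ => (z:ℤ))
          + ((I.val.bind (fun i => Kmult (a (2*i)))).map (fun z : ℕ => (z:ℤ))).map (fun z : ℤ => -z) := by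
      rw [Multiset.map_bind, Multiset.map_bind, ← Multiset.bind_add]
      apply Multiset.bind_congr
      intro i hi
      rw [← hIa i hi]
      exact hString_pair _
    have G3 : ((Finset.Icc 1 q) \ I).val.bind (fun j => hString (a (2*j) + 1) + hString (a (2*j-1) - 1))
        = (((Finset.Icc 1 q) \ I).val.bind (fun j => Smult (a (2*j)) (a (2*j-1)))).map (fun z : ℕ => (z:ℤ))
          + ((((Finset.Icc 1 q) \ I).val.bind (fun j => Smult (a (2*j)) (a (2*j-1)))).map (fun z : ℕ => (z:ℤ))).map (fun z : ℤ => -z) := by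
      rw [Multiset.map_bind, Multiset.map_bind, ← Multiset.bind_add]
      apply Multiset.bind_congr
      intro j hj
      have hj' : j ∈ Finset.Icc 1 q := (Finset.mem_sdiff.mp hj).1
      rw [Finset.mem_Icc] at hj'
      have h1 : 2*j - 1 + 1 = 2*j := by omega
      have hev1 := ha_even (2*j) (by omega)
      have hev2 := ha_even (2*j - 1) (by omega)
      have hge := ha_ge (2*j - 1) (by omega) (by omega)
      have hmono := ha_mono (2*j - 1) (by omega)
      rw [h1] at hmono
      rw [Nat.even_iff] at hev1 hev2
      obtain ⟨c, hc⟩ : ∃ c, a (2*j - 1) = 2*c + 2 := ⟨(a (2*j-1) - 2)/2, by omega⟩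
      obtain ⟨d, hd⟩ : ∃ d, a (2*j) = 2*c + 2 + 2*d := ⟨(a (2*j) - a (2*j-1))/2, by omega⟩
      rw [hc, hd]
      exact hString_S' c d
    have G4 : (μ : Multiset ℕ).bind hString + (μ : Multiset ℕ).bind hString
        = ((μ : Multiset ℕ).bind Kmult).map (fun z : ℕ => (z:ℤ))
          + (((μ : Multiset ℕ).bind Kmult).map (fun z : ℕ => (z:ℤ))).map (fun z : ℤ => -z) := by
      rw [Multiset.map_bind, Multiset.map_bind, ← Multiset.bind_add, ← Multiset.bind_add]
      exact Multiset.bind_congr (fun m _ => hString_pair m)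
    have G5 : (ν : Multiset ℕ).bind hString + (ν : Multiset ℕ).bind hString
        = ((ν : Multiset ℕ).bind Kmult).map (fun z : ℕ => (z:ℤ))
          + (((ν : Multiset ℕ).bind Kmult).map (fun z : ℕ => (z:ℤ))).map (fun z : ℤ => -z) := by
      rw [Multiset.map_bind, Multiset.map_bind, ← Multiset.bind_add, ← Multiset.bind_add]
      exact Multiset.bind_congr (fun m _ => hString_pair m)
    rw [hP, hR, HofP]
    simp only [Multiset.add_bind, Multiset.singleton_bind, two_smul_eq, Multiset.bind_assoc,
      Multiset.insert_eq_cons, Multiset.cons_bind, Multiset.singleton_bind]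
    rw [G2, G3, G4, G5]
    simp only [Multiset.map_add]
    rw [hs, ht, show 2*s+2-1 = 2*s+1 by omega, hString_odd s, hString_odd t]
    simp only [evensBelow_eq, Multiset.map_add, Multiset.map_singleton]
    push_cast [neg_zero]
    abel
  have hcard : P.sum / 2 = Multiset.card (R.map (fun z : ℕ => (z:ℤ))) := by
    have h1 : Multiset.card (HofP P) = P.sum := card_HofP P
    rw [key] at h1
    simp only [Multiset.card_add, Multiset.card_map] at h1
    simp only [Multiset.card_map]
    omega
  rw [hcard, key]
  refine (topN_symm _ (by
    intro x hx
    obtain ⟨y, _, rfl⟩ := Multiset.mem_map.mp hx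
    exact Int.natCast_nonneg y)).trans ?_
  simp only [Multiset.map_id']
  show Multiset.map _ R = Multiset.bind R fun a => {((a : ℕ) : ℤ)}
  rw [Multiset.bind_singleton]
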